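/- A graph G of order n is Hamilton-connected if and only if its (n+1)-closure C_{n+1}(G) is Hamilton-connected. -/

import Mathlib

open scoped Classical

/-- One step of forming the k-closure: join a pair of nonadjacent vertices
whose degree sum is at least k. -/
def ClosureStep {V : Type*} [Fintype V] (k : ℕ) (G H : SimpleGraph V) : Prop :=
  ∃ u v : V, u ≠ v ∧ ¬ G.Adj u v ∧ k ≤ G.degree u + G.degree v ∧
    H = G ⊔ SimpleGraph.edge u v

/-- `H` is a k-closure of `G`: obtained from `G` by successively joining pairs of
nonadjacent vertices of degree sum at least `k`, until no such pair remains. -/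
def IsKClosure {V : Type*} [Fintype V] (k : ℕ) (G H : SimpleGraph V) : Prop :=
  Relation.ReflTransGen (ClosureStep k) G H ∧ ∀ H', ¬ ClosureStep k H H'


open List Finset

/-- A Hamiltonian list for `G`: nodup, covers all vertices, consecutive vertices adjacent. -/
def HamList {V : Type*} (G : SimpleGraph V) (l : List V) : Prop :=
  l.Nodup ∧ (∀ v, v ∈ l) ∧ l.Chain' G.Adj

lemma walk_of_chain {V : Type*} {G : SimpleGraph V} (t : List V) :
    ∀ (a b : V), List.Chain' G.Adj (a :: t) → (a :: t).getLast (List.cons_ne_nil a t) = b →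
      ∃ p : G.Walk a b, p.support = a :: t := by
  induction t with
  | nil =>
    intro a b _ hb
    simp only [List.getLast_singleton] at hb
    subst hb
    exact ⟨SimpleGraph.Walk.nil, rfl⟩
  | cons c t ih =>
    intro a b hc hb
    unfold List.Chain' at hc
    rw [List.isChain_cons_cons] at hc
    have hb' : (c :: t).getLast (List.cons_ne_nil c t) = b := by
      rw [← hb, List.getLast_cons (List.cons_ne_nil c t)]
    obtain ⟨p, hp⟩ := ih c b hc.2 hb'
    exact ⟨SimpleGraph.Walk.cons hc.1 p, by simp [hp]⟩

lemma hc_iff_list {V : Type*} [Fintype V] [DecidableEq V] (G : SimpleGraph V) (x y : V) :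
    (∃ p : G.Walk x y, p.IsHamiltonian) ↔
      ∃ l, HamList G l ∧ l.head? = some x ∧ l.getLast? = some y := by
  constructor
  · rintro ⟨p, hp⟩
    refine ⟨p.support, ⟨?_, fun w => hp.mem_support w, p.isChain_adj_support⟩, ?_, ?_⟩
    · exact List.nodup_iff_count_le_one.mpr fun w => (hp w).le
    · rw [p.support_eq_cons]; rfl
    · rw [List.getLast?_eq_getLast_of_ne_nil p.support_ne_nil, p.getLast_support]
  · rintro ⟨l, ⟨hnd, hcov, hch⟩, hx, hy⟩
    cases l with
    | nil => simp at hx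
    | cons a t =>
      simp only [List.head?_cons, Option.some.injEq] at hx
      subst hx
      rw [List.getLast?_eq_getLast_of_ne_nil (List.cons_ne_nil a t), Option.some.injEq] at hy
      obtain ⟨p, hp⟩ := walk_of_chain t a y hch hy
      exact ⟨p, fun w => by rw [hp]; exact List.count_eq_one_of_mem hnd (hcov w)⟩

lemma surgery {V : Type*} {G : SimpleGraph V} (l : List V) (d : V) (s t : ℕ)
    (hs : 1 ≤ s) (hst : s ≤ t) (ht : t + 1 < l.length)
    (h1 : G.Adj (l.getD (s-1) d) (l.getD t d))
    (h2 : G.Adj (l.getD s d) (l.getD (t+1) d))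
    (hG : ∀ k, k + 1 < l.length → k ≠ s - 1 → k ≠ t → G.Adj (l.getD k d) (l.getD (k+1) d)) :
    ∃ l' : List V, l'.Perm l ∧ l'.Chain' G.Adj ∧ l'.head? = l.head? ∧ l'.getLast? = l.getLast? := by
  set X := l.take s with hX
  set M := (l.drop s).take (t+1-s) with hM
  set Y := l.drop (t+1) with hY
  have hXlen : X.length = s := by simp [hX]; omega
  have hMlen : M.length = t + 1 - s := by simp [hM]; omega
  have hYlen : Y.length = l.length - (t+1) := by simp [hY]
  have hXget : ∀ (k : ℕ) (hk : k < X.length), X[k] = l[k]'(by omega) := by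
    intro k hk; simp only [hX]; exact l.getElem_take
  have hMget : ∀ (k : ℕ) (hk : k < M.length), M[k] = l[s+k]'(by omega) := by
    intro k hk
    simp only [hM]
    rw [(l.drop s).getElem_take, l.getElem_drop]
  have hYget : ∀ (k : ℕ) (hk : k < Y.length), Y[k] = l[t+1+k]'(by omega) := by
    intro k hk; simp only [hY]; exact l.getElem_drop
  have hdrop : l.drop (t+1) = (l.drop s).drop (t+1-s) := by
    rw [List.drop_drop]; congr 1; omega
  have hdecomp : l = X ++ (M ++ Y) := by
    rw [hX, hM, hY, hdrop, List.take_append_drop, List.take_append_drop]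
  have hXne : X ≠ [] := by
    apply List.ne_nil_of_length_pos; omega
  have hMne : M ≠ [] := by
    apply List.ne_nil_of_length_pos; omega
  have hYne : Y ≠ [] := by
    apply List.ne_nil_of_length_pos; omega
  -- chains
  have hXc : X.Chain' G.Adj := by
    unfold List.Chain'
    rw [List.isChain_iff_getElem]
    intro i hi
    rw [hXget i (by omega), hXget (i+1) (by omega)]
    have := hG i (by omega) (by omega) (by omega)
    rwa [l.getD_eq_getElem d (by omega), l.getD_eq_getElem d (by omega)] at this
  have hMc : M.Chain' G.Adj := by
    unfold List.Chain'
    rw [List.isChain_iff_getElem]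
    intro i hi
    rw [hMget i (by omega), hMget (i+1) (by omega)]
    have := hG (s+i) (by omega) (by omega) (by omega)
    rwa [l.getD_eq_getElem d (by omega), l.getD_eq_getElem d (by omega)] at this
  have hYc : Y.Chain' G.Adj := by
    unfold List.Chain'
    rw [List.isChain_iff_getElem]
    intro i hi
    rw [hYget i (by omega), hYget (i+1) (by omega)]
    have := hG (t+1+i) (by omega) (by omega) (by omega)
    rwa [l.getD_eq_getElem d (by omega), l.getD_eq_getElem d (by omega)] at this
  have hMrev : M.reverse.Chain' G.Adj :=
    List.isChain_reverse.mpr (hMc.imp fun a b h => h.symm)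
  -- endpoints of pieces
  have hXlast : X.getLast? = some (l[s-1]'(by omega)) := by
    rw [List.getLast?_eq_getElem?, List.getElem?_eq_getElem (by omega),
      hXget _ (by omega)]
    simp only [show X.length - 1 = s - 1 from by omega]
  have hMlast : M.getLast? = some (l[t]'(by omega)) := by
    rw [List.getLast?_eq_getElem?, List.getElem?_eq_getElem (by omega),
      hMget _ (by omega)]
    simp only [show s + (M.length - 1) = t from by omega]
  have hMhead : M.head? = some (l[s]'(by omega)) := by
    rw [List.head?_eq_getElem?, List.getElem?_eq_getElem (by omega),
      hMget _ (by omega)]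
    simp only [Nat.add_zero]
  have hYhead : Y.head? = some (l[t+1]'ht) := by
    rw [List.head?_eq_getElem?, List.getElem?_eq_getElem (by omega),
      hYget _ (by omega)]
  have hYlast : Y.getLast? = l.getLast? := by
    rw [List.getLast?_eq_getElem?, List.getLast?_eq_getElem? (l := l),
      List.getElem?_eq_getElem (by omega), List.getElem?_eq_getElem (by omega),
      hYget _ (by omega)]
    simp only [show t + 1 + (Y.length - 1) = l.length - 1 from by omega]
  have hXhead : X.head? = l.head? := by
    rw [List.head?_eq_getElem?, List.head?_eq_getElem? (l := l),
      List.getElem?_eq_getElem (by omega), List.getElem?_eq_getElem (by omega),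
      hXget _ (by omega)]
  -- assemble
  refine ⟨X ++ (M.reverse ++ Y), ?_, ?_, ?_, ?_⟩
  · have : (X ++ (M.reverse ++ Y)).Perm (X ++ (M ++ Y)) :=
      ((M.reverse_perm).append_right Y).append_left X
    rw [← hdecomp] at this
    exact this
  · unfold List.Chain'
    rw [List.isChain_append]
    refine ⟨hXc, ?_, ?_⟩
    · rw [List.isChain_append]
      refine ⟨hMrev, hYc, ?_⟩
      intro p hp q hq
      rw [List.getLast?_reverse, hMhead, Option.mem_def, Option.some.injEq] at hp
      rw [hYhead, Option.mem_def, Option.some.injEq] at hq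
      subst hp; subst hq
      have := h2
      rwa [l.getD_eq_getElem d (by omega), l.getD_eq_getElem d ht] at this
    · intro p hp q hq
      rw [hXlast, Option.mem_def, Option.some.injEq] at hp
      rw [List.head?_append_of_ne_nil _ (by simpa using hMne),
        List.head?_reverse, hMlast, Option.mem_def, Option.some.injEq] at hq
      subst hp; subst hq
      have := h1
      rwa [l.getD_eq_getElem d (by omega), l.getD_eq_getElem d (by omega)] at this
  · rw [List.head?_append_of_ne_nil _ hXne, hXhead]
  · rw [List.getLast?_append_of_ne_nil _ (by simp [hYne]), List.getLast?_append_of_ne_nil _ hYne, hYlast]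

lemma pigeon {n : ℕ} (G : SimpleGraph (Fin n)) (u v : Fin n) (d : Fin n)
    (hna : ¬ G.Adj u v)
    (hdeg : n + 1 ≤ G.degree u + G.degree v)
    (l : List (Fin n)) (hnd : l.Nodup) (hcov : ∀ w, w ∈ l)
    (a : ℕ) (ha : a + 1 < l.length)
    (hu : l.getD a d = u) (hv : l.getD (a+1) d = v) :
    ∃ j, j + 1 < l.length ∧ G.Adj u (l.getD j d) ∧ G.Adj v (l.getD (j+1) d) ∧
      j ≠ a ∧ j ≠ a + 1 ∧ j + 1 ≠ a ∧ j + 1 ≠ a + 1 := by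
  classical
  have hlenn : l.length = n := by
    have h1 : l.toFinset = Finset.univ := by
      ext w; simp [hcov w]
    have h2 := List.toFinset_card_of_nodup hnd
    rw [h1] at h2
    simp at h2
    omega
  have ginj : Function.Injective l.get := List.nodup_iff_injective_get.mp hnd
  -- positions of neighbors
  set S : Finset (Fin l.length) := Finset.univ.filter (fun k => G.Adj u (l.get k)) with hS
  set T : Finset (Fin l.length) := Finset.univ.filter (fun k => G.Adj v (l.get k)) with hT
  have himg : ∀ (w : Fin n) (F : Finset (Fin l.length)),
      F = Finset.univ.filter (fun k => G.Adj w (l.get k)) → F.card = G.degree w := by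
    intro w F hF
    have : F.image l.get = G.neighborFinset w := by
      ext z
      simp only [hF, Finset.mem_image, Finset.mem_filter, Finset.mem_univ, true_and,
        SimpleGraph.mem_neighborFinset]
      constructor
      · rintro ⟨k, hk, rfl⟩; exact hk
      · intro hz
        obtain ⟨k, hk⟩ := List.mem_iff_get.mp (hcov z)
        exact ⟨k, by rw [hk]; exact hz, hk⟩
    calc F.card = (F.image l.get).card := (Finset.card_image_of_injective F ginj).symm
      _ = G.degree w := by rw [this]; rfl
  have hScard : S.card = G.degree u := himg u S hS
  have hTcard : T.card = G.degree v := himg v T hT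
  -- move to ℕ
  set A : Finset ℕ := S.image Fin.val with hA
  set B : Finset ℕ := T.image Fin.val with hB
  have hAcard : A.card = G.degree u := by
    rw [hA, Finset.card_image_of_injective _ Fin.val_injective, hScard]
  have hBcard : B.card = G.degree v := by
    rw [hB, Finset.card_image_of_injective _ Fin.val_injective, hTcard]
  have hmemA : ∀ j ∈ A, j < l.length ∧ G.Adj u (l.getD j d) := by
    intro j hj
    rw [hA, Finset.mem_image] at hj
    obtain ⟨k, hk, rfl⟩ := hj
    rw [hS, Finset.mem_filter] at hk
    refine ⟨k.isLt, ?_⟩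
    rw [l.getD_eq_getElem d k.isLt]
    simpa using hk.2
  have hmemB : ∀ j ∈ B, j < l.length ∧ G.Adj v (l.getD j d) := by
    intro j hj
    rw [hB, Finset.mem_image] at hj
    obtain ⟨k, hk, rfl⟩ := hj
    rw [hT, Finset.mem_filter] at hk
    refine ⟨k.isLt, ?_⟩
    rw [l.getD_eq_getElem d k.isLt]
    simpa using hk.2
  -- no neighbor positions at a, a+1
  have hgetu : l.getD a d = u := hu
  have hAa : a ∉ A := by
    intro hja
    have := (hmemA a hja).2
    rw [hu] at this
    exact G.loopless.irrefl u this
  have hAa1 : a + 1 ∉ A := by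
    intro hja
    have := (hmemA (a+1) hja).2
    rw [hv] at this
    exact hna this
  have hBa : a ∉ B := by
    intro hja
    have := (hmemB a hja).2
    rw [hu] at this
    exact hna this.symm
  have hBa1 : a + 1 ∉ B := by
    intro hja
    have := (hmemB (a+1) hja).2
    rw [hv] at this
    exact G.loopless.irrefl v this
  -- shifted set
  set C : Finset ℕ := (B.erase 0).image (fun b => b - 1) with hC
  have hCcard : B.card - 1 ≤ C.card := by
    have h1 : (B.erase 0).card = C.card := by
      rw [hC]
      rw [Finset.card_image_of_injOn]
      intro x hx y hy hxy
      have hx0 : x ≠ 0 := (Finset.mem_erase.mp hx).1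
      have hy0 : y ≠ 0 := (Finset.mem_erase.mp hy).1
      have hxy' : x - 1 = y - 1 := hxy
      omega
    calc B.card - 1 ≤ (B.erase 0).card := Finset.pred_card_le_card_erase
      _ = C.card := h1
  have hsub : A ∪ C ⊆ (Finset.range l.length).erase a := by
    intro j hj
    rw [Finset.mem_union] at hj
    rw [Finset.mem_erase, Finset.mem_range]
    rcases hj with hj | hj
    · exact ⟨fun h => hAa (h ▸ hj), (hmemA j hj).1⟩
    · rw [hC, Finset.mem_image] at hj
      obtain ⟨b, hb, rfl⟩ := hj
      have hb0 : b ≠ 0 := (Finset.mem_erase.mp hb).1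
      have hbB : b ∈ B := (Finset.mem_erase.mp hb).2
      have hblen := (hmemB b hbB).1
      constructor
      · intro h
        have : b = a + 1 := by omega
        exact hBa1 (this ▸ hbB)
      · omega
  have hinter : (A ∩ C).Nonempty := by
    by_contra hempty
    rw [Finset.not_nonempty_iff_eq_empty] at hempty
    have h1 : A.card + C.card = (A ∪ C).card := by
      rw [← Finset.card_union_add_card_inter, hempty]
      simp
    have h2 : (A ∪ C).card ≤ l.length - 1 := by
      calc (A ∪ C).card ≤ ((Finset.range l.length).erase a).card := Finset.card_le_card hsub
        _ = l.length - 1 := by rw [Finset.card_erase_of_mem (by simp; omega), Finset.card_range]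
    omega
  obtain ⟨j, hj⟩ := hinter
  rw [Finset.mem_inter] at hj
  obtain ⟨hjA, hjC⟩ := hj
  rw [hC, Finset.mem_image] at hjC
  obtain ⟨b, hb, rfl⟩ := hjC
  have hb0 : b ≠ 0 := (Finset.mem_erase.mp hb).1
  have hbB : b ∈ B := (Finset.mem_erase.mp hb).2
  have hblen := (hmemB b hbB).1
  have hbeq : b = (b - 1) + 1 := by omega
  refine ⟨b - 1, by omega, (hmemA _ hjA).2, by rw [← hbeq]; exact (hmemB b hbB).2,
    ?_, ?_, ?_, ?_⟩
  · intro h; exact hAa (h ▸ hjA)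
  · intro h; exact hAa1 (h ▸ hjA)
  · intro h; rw [← hbeq] at h; exact hBa (h ▸ hbB)
  · intro h; rw [← hbeq] at h; exact hBa1 (h ▸ hbB)

lemma inner_rotate {n : ℕ} (G : SimpleGraph (Fin n)) (u v : Fin n)
    (hna : ¬ G.Adj u v) (hdeg : n + 1 ≤ G.degree u + G.degree v)
    (l : List (Fin n)) (hnd : l.Nodup) (hcov : ∀ w, w ∈ l)
    (a : ℕ) (ha : a + 1 < l.length)
    (hu : l.getD a u = u) (hv : l.getD (a+1) u = v)
    (hG : ∀ k, k + 1 < l.length → k ≠ a → G.Adj (l.getD k u) (l.getD (k+1) u)) :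
    ∃ l' : List (Fin n), HamList G l' ∧ l'.head? = l.head? ∧ l'.getLast? = l.getLast? := by
  obtain ⟨j, hjlen, hju, hjv, h1, h2, h3, h4⟩ :=
    pigeon G u v u hna hdeg l hnd hcov a ha hu hv
  have hcases : j + 2 ≤ a ∨ a + 2 ≤ j := by omega
  have hfin : ∀ l' : List (Fin n), l'.Perm l → l'.Chain' G.Adj →
      l'.head? = l.head? → l'.getLast? = l.getLast? →
      ∃ l' : List (Fin n), HamList G l' ∧ l'.head? = l.head? ∧ l'.getLast? = l.getLast? := by
    intro l' hperm hch hh hl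
    exact ⟨l', ⟨hperm.nodup_iff.mpr hnd, fun w => hperm.mem_iff.mpr (hcov w), hch⟩, hh, hl⟩
  rcases hcases with hc | hc
  · -- segment [j+1, a] reversed
    obtain ⟨l', hperm, hch, hh, hl⟩ :=
      surgery l u (j+1) a (by omega) (by omega) ha
        (by rw [Nat.add_sub_cancel, hu]; exact hju.symm)
        (by rw [hv]; exact hjv.symm)
        (fun k hk _ hka => hG k hk hka)
    exact hfin l' hperm hch hh hl
  · -- segment [a+1, j] reversed
    obtain ⟨l', hperm, hch, hh, hl⟩ :=
      surgery l u (a+1) j (by omega) (by omega) (by omega)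
        (by rw [Nat.add_sub_cancel, hu]; exact hju)
        (by rw [hv]; exact hjv)
        (fun k hk hka _ => hG k hk (by omega))
    exact hfin l' hperm hch hh hl

lemma step_back {n : ℕ} {G H : SimpleGraph (Fin n)} (h : ClosureStep (n+1) G H)
    (l : List (Fin n)) (hl : HamList H l) :
    ∃ l' : List (Fin n), HamList G l' ∧ l'.head? = l.head? ∧ l'.getLast? = l.getLast? := by
  obtain ⟨u, v, huv, hna, hdeg, rfl⟩ := h
  obtain ⟨hnd, hcov, hch⟩ := hl
  by_cases hc : l.Chain' G.Adj
  · exact ⟨l, ⟨hnd, hcov, hc⟩, rfl, rfl⟩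
  unfold List.Chain' at hc
  rw [List.isChain_iff_getElem] at hc
  push_neg at hc
  obtain ⟨i, hi, hbad⟩ := hc
  have hil : i + 1 < l.length := by omega
  have hHadj : ∀ (k : ℕ) (hk : k + 1 < l.length),
      (G ⊔ SimpleGraph.edge u v).Adj (l[k]'(by omega)) (l[k+1]'hk) := by
    intro k hk
    have := List.isChain_iff_getElem.mp hch k (by omega)
    simpa using this
  have hinj : ∀ (k₁ k₂ : ℕ) (h₁ : k₁ < l.length) (h₂ : k₂ < l.length),
      l[k₁]'h₁ = l[k₂]'h₂ → k₁ = k₂ := by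
    intro k₁ k₂ h₁ h₂ he
    have := List.nodup_iff_injective_get.mp hnd
      (show l.get ⟨k₁, h₁⟩ = l.get ⟨k₂, h₂⟩ by simpa using he)
    simpa using this
  have hGbad := hHadj i hil
  rw [SimpleGraph.sup_adj] at hGbad
  have hbad' : ¬ G.Adj (l[i]'(by omega)) (l[i+1]'(by omega)) := by simpa using hbad
  rcases hGbad with hGb | hGb
  · exact absurd hGb hbad'
  rw [SimpleGraph.edge_adj] at hGb
  obtain ⟨hcase, -⟩ := hGb
  -- in either case, derive the pure-G chain condition away from position i
  have key : ∀ (u' v' : Fin n), ¬ G.Adj u' v' → (n+1 ≤ G.degree u' + G.degree v') →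
      l[i]'(by omega) = u' → (l[i+1]'(by omega)) = v' →
      ∃ l' : List (Fin n), HamList G l' ∧ l'.head? = l.head? ∧ l'.getLast? = l.getLast? := by
    intro u' v' hna' hdeg' hui hvi
    have hG : ∀ k, k + 1 < l.length → k ≠ i →
        G.Adj (l.getD k u') (l.getD (k+1) u') := by
      intro k hk hki
      rw [l.getD_eq_getElem u' (by omega), l.getD_eq_getElem u' hk]
      have := hHadj k hk
      rw [SimpleGraph.sup_adj] at this
      rcases this with h' | h'
      · exact h'
      rw [SimpleGraph.edge_adj] at h'
      obtain ⟨hc', hne'⟩ := h'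
      exfalso
      rcases hcase with ⟨he1, he2⟩ | ⟨he1, he2⟩
      · rcases hc' with ⟨hf1, hf2⟩ | ⟨hf1, hf2⟩
        · -- l[k] = u = l[i]
          exact hki (hinj k i (by omega) (by omega) (by rw [hf1, ← he1]))
        · -- l[k] = v = l[i+1], l[k+1] = u = l[i]
          have e1 := hinj k (i+1) (by omega) (by omega) (by rw [hf1, ← he2])
          have e2 := hinj (k+1) i (by omega) (by omega) (by rw [hf2, ← he1])
          omega
      · rcases hc' with ⟨hf1, hf2⟩ | ⟨hf1, hf2⟩
        · have e1 := hinj k (i+1) (by omega) (by omega) (by rw [hf1, ← he2])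
          have e2 := hinj (k+1) i (by omega) (by omega) (by rw [hf2, ← he1])
          omega
        · exact hki (hinj k i (by omega) (by omega) (by rw [hf1, ← he1]))
    exact inner_rotate G u' v' hna' hdeg' l hnd hcov i hil
      (by rw [l.getD_eq_getElem u' (by omega)]; exact hui)
      (by rw [l.getD_eq_getElem u' hil]; exact hvi) hG
  rcases hcase with ⟨he1, he2⟩ | ⟨he1, he2⟩
  · exact key u v hna hdeg he1 he2
  · exact key v u (fun h' => hna h'.symm) (by omega) he1 he2

lemma hc_step {n : ℕ} {G H : SimpleGraph (Fin n)} (h : ClosureStep (n+1) G H)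
    (hH : ∀ u v : Fin n, u ≠ v → ∃ p : H.Walk u v, p.IsHamiltonian) :
    ∀ u v : Fin n, u ≠ v → ∃ p : G.Walk u v, p.IsHamiltonian := by
  intro x y hxy
  obtain ⟨l, hl, hh, hlst⟩ := (hc_iff_list H x y).mp (hH x y hxy)
  obtain ⟨l', hl', hh', hlst'⟩ := step_back h l hl
  exact (hc_iff_list G x y).mpr ⟨l', hl', by rw [hh', hh], by rw [hlst', hlst]⟩

lemma hc_mono {n : ℕ} {G H : SimpleGraph (Fin n)} (hle : G ≤ H)
    (hG : ∀ u v : Fin n, u ≠ v → ∃ p : G.Walk u v, p.IsHamiltonian) :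
    ∀ u v : Fin n, u ≠ v → ∃ p : H.Walk u v, p.IsHamiltonian := by
  intro x y hxy
  obtain ⟨p, hp⟩ := hG x y hxy
  exact ⟨p.mapLe hle, hp.map _ Function.bijective_id⟩

/-- A graph G of order n is Hamilton-connected iff its (n+1)-closure is
Hamilton-connected. -/
theorem hamilton_connected_iff_closure (n : ℕ) (G H : SimpleGraph (Fin n))
    (hH : IsKClosure (n + 1) G H) :
    (∀ u v : Fin n, u ≠ v → ∃ p : G.Walk u v, p.IsHamiltonian) ↔
      (∀ u v : Fin n, u ≠ v → ∃ p : H.Walk u v, p.IsHamiltonian) := by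
  obtain ⟨hsteps, -⟩ := hH
  constructor
  · intro hG
    have hle : G ≤ H := by
      induction hsteps with
      | refl => exact le_refl G
      | tail hs hstep ih =>
        obtain ⟨u, v, -, -, -, rfl⟩ := hstep
        exact le_trans ih le_sup_left
    exact hc_mono hle hG
  · intro hHham
    induction hsteps using Relation.ReflTransGen.head_induction_on with
    | refl => exact hHham
    | head hstep _ ih => exact hc_step hstep ih
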